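/- Let α, β ∈ k with 2β = 0 in k. Then the ideal I = (t⁶ + αt¹⁰, t⁹ + βt¹⁰) of A = k⟦t⁵, t⁶, t⁹⟧ is an Ulrich ideal of A. -/

import Mathlib

noncomputable section

open PowerSeries

set_option synthInstance.maxHeartbeats 400000
set_option maxHeartbeats 800000

variable (k : Type*) [Field k]

/-- The subalgebra of `k⟦t⟧` consisting of power series supported on an
additive submonoid `S ⊆ ℕ` (the "semigroup ring" of `S`). -/
def semigroupRing (S : AddSubmonoid ℕ) : Subalgebra k (PowerSeries k) where
  carrier := {f | ∀ n : ℕ, coeff n f ≠ 0 → n ∈ S}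
  zero_mem' := by intro n hn; simp at hn
  add_mem' := by
    intro f g hf hg n hn
    by_contra h
    exact hn (by
      rw [map_add, of_not_not fun h1 => h (hf n h1), of_not_not fun h2 => h (hg n h2), add_zero])
  one_mem' := by
    intro n hn
    rw [coeff_one] at hn
    simp only [ne_eq, ite_eq_right_iff, not_forall] at hn
    exact hn.1 ▸ S.zero_mem
  mul_mem' := by
    intro f g hf hg n hn
    rw [coeff_mul] at hn
    obtain ⟨p, hp, hne⟩ := Finset.exists_ne_zero_of_sum_ne_zero hn
    have hp : p.1 + p.2 = n := by simpa using hp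
    exact hp ▸ S.add_mem (hf p.1 (left_ne_zero_of_mul hne)) (hg p.2 (right_ne_zero_of_mul hne))
  algebraMap_mem' := by
    intro a n hn
    have : (algebraMap k (PowerSeries k)) a = C a := rfl
    rw [this, coeff_C] at hn
    simp only [ne_eq, ite_eq_right_iff, not_forall] at hn
    exact hn.1 ▸ S.zero_mem

lemma X_pow_mem {S : AddSubmonoid ℕ} {n : ℕ} (hn : n ∈ S) :
    (X : PowerSeries k) ^ n ∈ semigroupRing k S := by
  intro m hm
  rw [coeff_X_pow] at hm
  simp only [ne_eq, ite_eq_right_iff, not_forall] at hm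
  exact hm.1 ▸ hn

/-- The maximal ideal of a subalgebra of `k⟦t⟧`: the kernel of the constant-coefficient map. -/
def maximalIdealOf (A : Subalgebra k (PowerSeries k)) : Ideal A :=
  RingHom.ker ((constantCoeff (R := k)).comp A.val.toRingHom)

/-- `I` is an Ulrich ideal of `A`: `I` is `m`-primary, and there is `a ∈ I` such that `(a)`
is a reduction of `I`, `I ≠ (a)`, `I² = aI`, and `I/I²` is a free `A/I`-module. -/
def IsUlrichIdeal (A : Subalgebra k (PowerSeries k)) (I : Ideal A) : Prop :=
  I.IsPrimary ∧ I.radical = maximalIdealOf k A ∧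
  ∃ a ∈ I, (∃ n : ℕ, I ^ (n + 1) = Ideal.span {a} * I ^ n) ∧
    I ≠ Ideal.span {a} ∧
    I ^ 2 = Ideal.span {a} * I ∧
    Module.Free (A ⧸ I) I.Cotangent

/-- `A = k⟦t⁵,t⁶,t⁹⟧`. -/
def A569 : Subalgebra k (PowerSeries k) :=
  semigroupRing k (AddSubmonoid.closure ({5, 6, 9} : Set ℕ))

lemma mem569 {n : ℕ} (a b c : ℕ) (h : a * 5 + b * 6 + c * 9 = n) :
    n ∈ AddSubmonoid.closure ({5, 6, 9} : Set ℕ) := by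
  subst h
  have h5 : (5 : ℕ) ∈ AddSubmonoid.closure ({5, 6, 9} : Set ℕ) :=
    AddSubmonoid.subset_closure (by norm_num)
  have h6 : (6 : ℕ) ∈ AddSubmonoid.closure ({5, 6, 9} : Set ℕ) :=
    AddSubmonoid.subset_closure (by norm_num)
  have h9 : (9 : ℕ) ∈ AddSubmonoid.closure ({5, 6, 9} : Set ℕ) :=
    AddSubmonoid.subset_closure (by norm_num)
  simpa [smul_eq_mul] using
    add_mem (add_mem (nsmul_mem h5 a) (nsmul_mem h6 b)) (nsmul_mem h9 c)

/-- `t⁶ + αt¹⁰` as an element of `A = k⟦t⁵,t⁶,t⁹⟧`. -/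
def f569 (α : k) : A569 k :=
  ⟨X ^ 6 + α • X ^ 10, by
    refine add_mem (X_pow_mem k (mem569 0 1 0 (by norm_num)))
      (Subalgebra.smul_mem _ (X_pow_mem k (mem569 2 0 0 (by norm_num))) α)⟩

/-- `t⁹ + βt¹⁰` as an element of `A = k⟦t⁵,t⁶,t⁹⟧`. -/
def g569 (β : k) : A569 k :=
  ⟨X ^ 9 + β • X ^ 10, by
    refine add_mem (X_pow_mem k (mem569 0 0 1 (by norm_num)))
      (Subalgebra.smul_mem _ (X_pow_mem k (mem569 2 0 0 (by norm_num))) β)⟩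



namespace UlrichAux

/-! ### The numerical semigroup `H = ⟨5,6,9⟩` -/

abbrev H : AddSubmonoid ℕ := AddSubmonoid.closure ({5, 6, 9} : Set ℕ)

lemma memH (a b c : ℕ) {n : ℕ} (h : a * 5 + b * 6 + c * 9 = n) : n ∈ H :=
  mem569 a b c h

lemma memH_of_ge (n : ℕ) (hn : 14 ≤ n) : n ∈ H := by
  induction n using Nat.strong_induction_on with
  | _ n ih =>
    by_cases h : n ≤ 18
    · interval_cases n
      · exact memH 1 0 1 rfl
      · exact memH 0 1 1 rfl
      · exact memH 2 1 0 rfl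
      · exact memH 1 2 0 rfl
      · exact memH 0 0 2 rfl
    · have h5 : (5 : ℕ) ∈ H := AddSubmonoid.subset_closure (by norm_num)
      have h2 := ih (n - 5) (by omega) (by omega)
      have h3 := add_mem h5 h2
      simpa [Nat.add_sub_cancel' (by omega : 5 ≤ n)] using h3

def Hbound : AddSubmonoid ℕ where
  carrier := {n | n = 0 ∨ n = 5 ∨ n = 6 ∨ (9 ≤ n ∧ n ≤ 12) ∨ 14 ≤ n}
  zero_mem' := by left; rfl
  add_mem' := by intro a b ha hb; simp only [Set.mem_setOf_eq] at *; omega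

lemma memH_iff (n : ℕ) : n ∈ H ↔ (n = 0 ∨ n = 5 ∨ n = 6 ∨ (9 ≤ n ∧ n ≤ 12) ∨ 14 ≤ n) := by
  constructor
  · intro h
    have hle : H ≤ Hbound := by
      rw [AddSubmonoid.closure_le]
      intro x hx
      simp only [Set.mem_insert_iff, Set.mem_singleton_iff] at hx
      rcases hx with rfl | rfl | rfl <;> simp [Hbound]
    exact hle h
  · rintro (rfl | rfl | rfl | ⟨h1, h2⟩ | h)
    · exact zero_mem _
    · exact memH 1 0 0 rfl
    · exact memH 0 1 0 rfl
    · interval_cases n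
      · exact memH 0 0 1 rfl
      · exact memH 2 0 0 rfl
      · exact memH 1 1 0 rfl
      · exact memH 0 2 0 rfl
    · exact memH_of_ge n h

lemma notH {n : ℕ} (h : n = 1 ∨ n = 2 ∨ n = 3 ∨ n = 4 ∨ n = 7 ∨ n = 8 ∨ n = 13) : n ∉ H := by
  rw [memH_iff]; omega

/-! ### Membership helpers for `A = A569 k` -/

variable {k}

lemma coeff_zero_of_nmem {z : PowerSeries k} (hz : z ∈ A569 k) {n : ℕ} (hn : n ∉ H) :
    coeff n z = 0 := by
  by_contra h
  exact hn (hz n h)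

lemma mem_A_of_X14_dvd {z : PowerSeries k} (h : (X : PowerSeries k) ^ 14 ∣ z) :
    z ∈ A569 k := by
  intro n hn
  rcases lt_or_ge n 14 with h14 | h14
  · exact absurd (X_pow_dvd_iff.mp h n h14) hn
  · exact memH_of_ge n h14

lemma C_mem (c : k) : C c ∈ A569 k := by
  have : (algebraMap k (PowerSeries k)) c = C c := rfl
  exact this ▸ (A569 k).algebraMap_mem c

/-! ### Inverse of `1 + α X⁴` and of its square -/

/-- inverse of `1 + α X⁴` -/
def M (α : k) : PowerSeries k := mk fun n => if 4 ∣ n then (-α) ^ (n / 4) else 0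

/-- inverse of `(1 + α X⁴)²` -/
def M2 (α : k) : PowerSeries k :=
  mk fun n => if 4 ∣ n then ((n / 4 + 1 : ℕ) : k) * (-α) ^ (n / 4) else 0

@[simp] lemma coeff_M (α : k) (n : ℕ) :
    coeff n (M α) = if 4 ∣ n then (-α) ^ (n / 4) else 0 := coeff_mk _ _

@[simp] lemma coeff_M2 (α : k) (n : ℕ) :
    coeff n (M2 α) = if 4 ∣ n then ((n / 4 + 1 : ℕ) : k) * (-α) ^ (n / 4) else 0 := coeff_mk _ _

lemma M_mul (α : k) : M α * (1 + C α * X ^ 4) = 1 := by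
  have h : M α * (1 + C α * X ^ 4) = M α + C α * M α * X ^ 4 := by ring
  rw [h]
  ext n
  rw [map_add, coeff_mul_X_pow', coeff_C_mul, coeff_M, coeff_one]
  by_cases hd : 4 ∣ n
  · rcases Nat.eq_zero_or_pos n with rfl | hn
    · norm_num
    · have h4 : 4 ≤ n := by omega
      have hd' : 4 ∣ n - 4 := by omega
      have hq : n / 4 = (n - 4) / 4 + 1 := by omega
      rw [if_pos hd, if_pos h4, coeff_M, if_pos hd', if_neg (by omega), hq, pow_succ]
      ring
  · have hn0 : ¬ n = 0 := by rintro rfl; exact hd ⟨0, rfl⟩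
    rw [if_neg hd, if_neg hn0]
    by_cases h4 : 4 ≤ n
    · have hd' : ¬ 4 ∣ n - 4 := by omega
      rw [if_pos h4, coeff_M, if_neg hd']
      ring
    · rw [if_neg h4]; ring

lemma M2_mul (α : k) : M2 α * (1 + C α * X ^ 4) = M α := by
  have h : M2 α * (1 + C α * X ^ 4) = M2 α + C α * M2 α * X ^ 4 := by ring
  rw [h]
  ext n
  rw [map_add, coeff_mul_X_pow', coeff_C_mul, coeff_M2, coeff_M]
  by_cases hd : 4 ∣ n
  · rcases Nat.eq_zero_or_pos n with rfl | hn
    · norm_num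
    · have h4 : 4 ≤ n := by omega
      have hd' : 4 ∣ n - 4 := by omega
      have hq : n / 4 = (n - 4) / 4 + 1 := by omega
      rw [if_pos hd, if_pos h4, coeff_M2, if_pos hd', if_pos hd, hq, pow_succ]
      push_cast
      ring
  · rw [if_neg hd, if_neg hd]
    by_cases h4 : 4 ≤ n
    · have hd' : ¬ 4 ∣ n - 4 := by omega
      rw [if_pos h4, coeff_M2, if_neg hd']
      ring
    · rw [if_neg h4]; ring

lemma M2_mul_sq (α : k) : M2 α * ((1 + C α * X ^ 4) * (1 + C α * X ^ 4)) = 1 := by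
  rw [← mul_assoc, M2_mul, M_mul]

/-! ### The generators -/

lemma f_val (α : k) : ((f569 k α : A569 k) : PowerSeries k) = X ^ 6 + C α * X ^ 10 := by
  show X ^ 6 + α • X ^ 10 = _
  rw [smul_eq_C_mul]

lemma g_val (β : k) : ((g569 k β : A569 k) : PowerSeries k) = X ^ 9 + C β * X ^ 10 := by
  show X ^ 9 + β • X ^ 10 = _
  rw [smul_eq_C_mul]

end UlrichAux

namespace UlrichAux
variable {k : Type*} [Field k]

/-! ### The key identity `g² = p f² + q f g` -/

/-- the polynomial cofactor `W` with `p = W/(1+αX⁴)²` -/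
def Wser (α β : k) : PowerSeries k :=
  X ^ 6 - C β ^ 3 * X ^ 9 - C α * C β ^ 2 * X ^ 12 - C α * C β ^ 4 * X ^ 14
    - C α ^ 2 * C β ^ 3 * X ^ 17 - C α ^ 2 * C β ^ 4 * X ^ 18

/-- the cofactor `q` -/
def qser (α β : k) : PowerSeries k :=
  C β ^ 2 * X ^ 5 + C α * C β ^ 3 * X ^ 10

lemma coeff_W_zero (α β : k) {i : ℕ}
    (h : i ≠ 6 ∧ i ≠ 9 ∧ i ≠ 12 ∧ i ≠ 14 ∧ i ≠ 17 ∧ i ≠ 18) :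
    coeff i (Wser α β) = 0 := by
  obtain ⟨h6, h9, h12, h14, h17, h18⟩ := h
  simp [Wser, ← map_pow, ← map_mul, coeff_C_mul, coeff_X_pow, h6, h9, h12, h14, h17, h18]

lemma coeff_W9 (α β : k) : coeff 9 (Wser α β) = -(β ^ 3) := by
  norm_num [Wser, ← map_pow, ← map_mul, coeff_C_mul, coeff_X_pow]

lemma key_identity (α β : k) (hβ : 2 * β = 0) :
    (X ^ 9 + C β * X ^ 10) ^ 2
      = (Wser α β * M2 α) * (X ^ 6 + C α * X ^ 10) ^ 2
        + qser α β * ((X ^ 6 + C α * X ^ 10) * (X ^ 9 + C β * X ^ 10)) := by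
  have e1 := M2_mul_sq α
  have e2 : (2 : PowerSeries k) * C β = 0 := by
    have h2 : (2 : PowerSeries k) * C β = C (2 * β) := by
      rw [map_mul, map_ofNat]
    rw [h2, hβ, map_zero]
  simp only [Wser, qser]
  linear_combination (-((X ^ 6 - C β ^ 3 * X ^ 9 - C α * C β ^ 2 * X ^ 12
      - C α * C β ^ 4 * X ^ 14 - C α ^ 2 * C β ^ 3 * X ^ 17
      - C α ^ 2 * C β ^ 4 * X ^ 18) * X ^ 12)) * e1
    + (X ^ 19 - C α * C β ^ 2 * X ^ 25) * e2

lemma p_mem (α β : k) (hβ : 2 * β = 0) : Wser α β * M2 α ∈ A569 k := by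
  intro n hn
  by_contra hnH
  apply hn
  rw [memH_iff] at hnH
  have hb : n = 1 ∨ n = 2 ∨ n = 3 ∨ n = 4 ∨ n = 7 ∨ n = 8 ∨ n = 13 := by omega
  rw [coeff_mul]
  apply Finset.sum_eq_zero
  rintro ⟨i, j⟩ hij
  rw [Finset.HasAntidiagonal.mem_antidiagonal] at hij
  simp only [coeff_M2]
  by_cases hd : 4 ∣ j
  · rw [if_pos hd]
    rcases (by omega :
        (i = 9 ∧ j = 4) ∨ (i ≠ 6 ∧ i ≠ 9 ∧ i ≠ 12 ∧ i ≠ 14 ∧ i ≠ 17 ∧ i ≠ 18)) with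
      ⟨rfl, rfl⟩ | hne
    · rw [coeff_W9]
      have h24 : ((4 / 4 + 1 : ℕ) : k) = 2 := by norm_num
      have h44 : (4 : ℕ) / 4 = 1 := rfl
      rw [h24, h44, pow_one]
      linear_combination (α * β ^ 2) * hβ
    · rw [coeff_W_zero _ _ hne, zero_mul]
  · rw [if_neg hd, mul_zero]

lemma q_mem (α β : k) : qser α β ∈ A569 k := by
  have h5 : ((X : PowerSeries k) ^ 5) ∈ A569 k := X_pow_mem k (memH 1 0 0 rfl)
  have h10 : ((X : PowerSeries k) ^ 10) ∈ A569 k := X_pow_mem k (memH 2 0 0 rfl)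
  exact add_mem (mul_mem (pow_mem (C_mem β) 2) h5)
    (mul_mem (mul_mem (C_mem α) (pow_mem (C_mem β) 3)) h10)

end UlrichAux

namespace UlrichAux
variable {k : Type*} [Field k]

/-! ### `I² = f·I` -/

lemma gsq_mem (α β : k) (hβ : 2 * β = 0) :
    g569 k β * g569 k β ∈ Ideal.span {f569 k α} * Ideal.span {f569 k α, g569 k β} := by
  have pA : A569 k := ⟨Wser α β * M2 α, p_mem α β hβ⟩
  refine Ideal.mem_span_singleton_mul.mpr
    ⟨⟨Wser α β * M2 α, p_mem α β hβ⟩ * f569 k α + ⟨qser α β, q_mem α β⟩ * g569 k β, ?_, ?_⟩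
  · exact Ideal.add_mem _
      (Ideal.mul_mem_left _ _ (Ideal.subset_span (Set.mem_insert _ _)))
      (Ideal.mul_mem_left _ _ (Ideal.subset_span (Set.mem_insert_of_mem _ rfl)))
  · apply Subtype.ext
    push_cast
    rw [f_val, g_val]
    linear_combination (-1 : PowerSeries k) * key_identity α β hβ

lemma I_sq (α β : k) (hβ : 2 * β = 0) :
    (Ideal.span {f569 k α, g569 k β}) ^ 2
      = Ideal.span {f569 k α} * Ideal.span {f569 k α, g569 k β} := by
  apply le_antisymm
  · rw [pow_two]
    refine Ideal.mul_le.mpr ?_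
    intro r hr s hs
    rw [Ideal.mem_span_pair] at hr hs
    obtain ⟨a, b, rfl⟩ := hr
    obtain ⟨c, d, rfl⟩ := hs
    have hfg : (a * f569 k α + b * g569 k β) * (c * f569 k α + d * g569 k β)
        = f569 k α * (a * c * f569 k α + (a * d + b * c) * g569 k β)
          + (b * d) * (g569 k β * g569 k β) := by ring
    rw [hfg]
    refine Ideal.add_mem _ ?_ (Ideal.mul_mem_left _ _ (gsq_mem α β hβ))
    exact Ideal.mul_mem_mul (Ideal.mem_span_singleton_self _)
      (Ideal.mem_span_pair.mpr ⟨_, _, rfl⟩)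
  · rw [pow_two]
    exact Ideal.mul_mono (Ideal.span_mono (Set.singleton_subset_iff.mpr (Set.mem_insert _ _)))
      le_rfl

/-! ### `I ≠ (f)` -/

lemma I_ne (α β : k) :
    Ideal.span {f569 k α, g569 k β} ≠ Ideal.span {f569 k α} := by
  intro h
  have hg : g569 k β ∈ Ideal.span {f569 k α} :=
    h ▸ Ideal.subset_span (Set.mem_insert_of_mem _ rfl)
  rw [Ideal.mem_span_singleton'] at hg
  obtain ⟨c, hc⟩ := hg
  have hval : (c : PowerSeries k) * ((f569 k α : A569 k) : PowerSeries k)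
      = ((g569 k β : A569 k) : PowerSeries k) := by
    exact_mod_cast congrArg Subtype.val hc
  rw [f_val, g_val] at hval
  have h9 := congrArg (coeff 9) hval
  have e1 : (c : PowerSeries k) * (X ^ 6 + C α * X ^ 10)
      = (c : PowerSeries k) * X ^ 6 + C α * ((c : PowerSeries k) * X ^ 10) := by ring
  rw [e1] at h9
  simp only [map_add, coeff_mul_X_pow', coeff_C_mul, coeff_X_pow] at h9
  norm_num at h9
  rw [coeff_zero_of_nmem c.2 (notH (by norm_num))] at h9
  exact zero_ne_one h9

/-! ### maximal ideal, radical, primary -/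

lemma const_surj :
    Function.Surjective ((constantCoeff (R := k)).comp (A569 k).val.toRingHom) := by
  intro c
  exact ⟨⟨C c, C_mem c⟩, by simp⟩

lemma m_isMaximal : (maximalIdealOf k (A569 k)).IsMaximal :=
  RingHom.ker_isMaximal_of_surjective _ const_surj

lemma f_mem_m (α : k) : f569 k α ∈ maximalIdealOf k (A569 k) := by
  have : constantCoeff (R := k) ((f569 k α : A569 k) : PowerSeries k) = 0 := by
    rw [f_val]; simp
  exact this

lemma g_mem_m (β : k) : g569 k β ∈ maximalIdealOf k (A569 k) := by
  have : constantCoeff (R := k) ((g569 k β : A569 k) : PowerSeries k) = 0 := by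
    rw [g_val]; simp
  exact this

lemma pow4_mem (α : k) (x : A569 k) (hx : x ∈ maximalIdealOf k (A569 k)) :
    x ^ 4 ∈ Ideal.span {f569 k α} := by
  have h0 : coeff 0 (x : PowerSeries k) = 0 := by
    have : constantCoeff (R := k) (x : PowerSeries k) = 0 := hx
    rwa [coeff_zero_eq_constantCoeff]
  have h5 : (X : PowerSeries k) ^ 5 ∣ (x : PowerSeries k) := by
    rw [X_pow_dvd_iff]
    intro m hm
    interval_cases m
    · exact h0
    · exact coeff_zero_of_nmem x.2 (notH (by norm_num))
    · exact coeff_zero_of_nmem x.2 (notH (by norm_num))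
    · exact coeff_zero_of_nmem x.2 (notH (by norm_num))
    · exact coeff_zero_of_nmem x.2 (notH (by norm_num))
  have h20 : (X : PowerSeries k) ^ 20 ∣ (x : PowerSeries k) ^ 4 := by
    have := pow_dvd_pow_of_dvd h5 4
    rwa [← pow_mul] at this
  obtain ⟨u, hu⟩ := h20
  have hc : (X : PowerSeries k) ^ 14 * (u * M α) ∈ A569 k := mem_A_of_X14_dvd ⟨_, rfl⟩
  refine Ideal.mem_span_singleton'.mpr ⟨⟨_, hc⟩, ?_⟩
  apply Subtype.ext
  push_cast
  rw [f_val]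
  linear_combination (X ^ 20 * u) * (M_mul α) - hu

lemma rad_I (α β : k) :
    (Ideal.span {f569 k α, g569 k β}).radical = maximalIdealOf k (A569 k) := by
  apply le_antisymm
  · rw [m_isMaximal.isPrime.radical_le_iff, Ideal.span_le]
    rintro x (rfl | rfl)
    · exact f_mem_m α
    · exact g_mem_m β
  · intro x hx
    exact ⟨4, Ideal.span_mono (Set.singleton_subset_iff.mpr (Set.mem_insert _ _))
      (pow4_mem α x hx)⟩

lemma I_isPrimary (α β : k) : (Ideal.span {f569 k α, g569 k β}).IsPrimary :=
  Ideal.isPrimary_of_isMaximal_radical (by rw [rad_I]; exact m_isMaximal)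

end UlrichAux

namespace UlrichAux
variable {k : Type*} [Field k]

/-! ### The master membership lemma -/

lemma coeff_WdM_zero (Wd : PowerSeries k) (α : k) {n : ℕ}
    (hz : ∀ i, i ≤ n → 4 ∣ (n - i) → coeff i Wd = 0) : coeff n (Wd * M α) = 0 := by
  rw [coeff_mul]
  apply Finset.sum_eq_zero
  rintro ⟨i, j⟩ hij
  rw [Finset.HasAntidiagonal.mem_antidiagonal] at hij
  simp only [coeff_M]
  by_cases hd : 4 ∣ j
  · rw [hz i (by omega) (by omega), zero_mul]
  · rw [if_neg hd, mul_zero]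

lemma mem_I_of_coeffs (α β : k) (y : A569 k)
    (h0 : coeff 0 (y : PowerSeries k) = 0)
    (h5 : coeff 5 (y : PowerSeries k) = 0)
    (h10 : coeff 10 (y : PowerSeries k)
      = α * coeff 6 (y : PowerSeries k) + β * coeff 9 (y : PowerSeries k)) :
    y ∈ Ideal.span {f569 k α, g569 k β} := by
  set yv : PowerSeries k := (y : PowerSeries k) with hyv
  set y6 : k := coeff 6 yv with hy6
  set y9 : k := coeff 9 yv with hy9
  set a : k := coeff 14 yv with ha
  set b : k := coeff 19 yv - α * coeff 15 yv + α * β * coeff 14 yv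
      + α ^ 2 * coeff 11 yv with hb
  have Z : ∀ n : ℕ, n ∉ H → coeff n yv = 0 := fun n hn => coeff_zero_of_nmem y.2 hn
  set Qv : PowerSeries k := C y9 + C a * X ^ 5 + C b * X ^ 10 with hQv
  set w : PowerSeries k :=
    yv - C y6 * (X ^ 6 + C α * X ^ 10) - Qv * (X ^ 9 + C β * X ^ 10) with hwdef
  have hwe : w = yv - C y6 * X ^ 6 - C (α * y6) * X ^ 10 - C y9 * X ^ 9
      - C (β * y9) * X ^ 10 - C a * X ^ 14 - C (β * a) * X ^ 15
      - C b * X ^ 19 - C (β * b) * X ^ 20 := by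
    rw [hwdef, hQv]; simp only [map_mul]; ring
  have cw : ∀ n : ℕ, coeff n w = coeff n yv
      - y6 * (if n = 6 then 1 else 0) - α * y6 * (if n = 10 then 1 else 0)
      - y9 * (if n = 9 then 1 else 0) - β * y9 * (if n = 10 then 1 else 0)
      - a * (if n = 14 then 1 else 0) - β * a * (if n = 15 then 1 else 0)
      - b * (if n = 19 then 1 else 0) - β * b * (if n = 20 then 1 else 0) := by
    intro n
    rw [hwe]
    simp only [map_sub, coeff_C_mul, coeff_X_pow]
    try ring
  have hw0 : coeff 0 w = 0 := by rw [cw]; norm_num; simpa using h0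
  have hw1 : coeff 1 w = 0 := by rw [cw]; norm_num; exact Z 1 (notH (by norm_num))
  have hw2 : coeff 2 w = 0 := by rw [cw]; norm_num; exact Z 2 (notH (by norm_num))
  have hw3 : coeff 3 w = 0 := by rw [cw]; norm_num; exact Z 3 (notH (by norm_num))
  have hw4 : coeff 4 w = 0 := by rw [cw]; norm_num; exact Z 4 (notH (by norm_num))
  have hw5 : coeff 5 w = 0 := by rw [cw]; norm_num; exact h5
  have hw6 : coeff 6 w = 0 := by rw [cw]; norm_num; rw [hy6, sub_self]
  have hw7 : coeff 7 w = 0 := by rw [cw]; norm_num; exact Z 7 (notH (by norm_num))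
  have hw8 : coeff 8 w = 0 := by rw [cw]; norm_num; exact Z 8 (notH (by norm_num))
  have hw9 : coeff 9 w = 0 := by rw [cw]; norm_num; rw [hy9, sub_self]
  have hw10 : coeff 10 w = 0 := by rw [cw]; norm_num; linear_combination h10
  have hw13 : coeff 13 w = 0 := by rw [cw]; norm_num; exact Z 13 (notH (by norm_num))
  have hw14 : coeff 14 w = 0 := by rw [cw]; norm_num; rw [ha, sub_self]
  have hwrel : coeff 19 w - α * coeff 15 w + α ^ 2 * coeff 11 w = 0 := by
    rw [cw, cw, cw]; norm_num; rw [hb]; ring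
  have hdvd : (X : PowerSeries k) ^ 6 ∣ w := by
    rw [X_pow_dvd_iff]
    intro m hm
    interval_cases m
    · exact hw0
    · exact hw1
    · exact hw2
    · exact hw3
    · exact hw4
    · exact hw5
  obtain ⟨Wd, hWd⟩ := hdvd
  have hWdc : ∀ n : ℕ, coeff n Wd = coeff (n + 6) w := by
    intro n
    rw [hWd, coeff_X_pow_mul]
  have hv0 : coeff 0 Wd = 0 := by rw [hWdc]; exact hw6
  have hv1 : coeff 1 Wd = 0 := by rw [hWdc]; exact hw7
  have hv2 : coeff 2 Wd = 0 := by rw [hWdc]; exact hw8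
  have hv3 : coeff 3 Wd = 0 := by rw [hWdc]; exact hw9
  have hv4 : coeff 4 Wd = 0 := by rw [hWdc]; exact hw10
  have hv7 : coeff 7 Wd = 0 := by rw [hWdc]; exact hw13
  have hv8 : coeff 8 Wd = 0 := by rw [hWdc]; exact hw14
  have hvrel : coeff 13 Wd - α * coeff 9 Wd + α ^ 2 * coeff 5 Wd = 0 := by
    rw [hWdc, hWdc, hWdc]; exact hwrel
  have hP : Wd * M α ∈ A569 k := by
    intro n hn
    by_contra hnH
    apply hn
    rw [memH_iff] at hnH
    have hbn : n = 1 ∨ n = 2 ∨ n = 3 ∨ n = 4 ∨ n = 7 ∨ n = 8 ∨ n = 13 := by omega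
    rcases hbn with rfl | rfl | rfl | rfl | rfl | rfl | rfl
    · exact coeff_WdM_zero Wd α (fun i hi hd => by interval_cases i <;> first | assumption | omega)
    · exact coeff_WdM_zero Wd α (fun i hi hd => by interval_cases i <;> first | assumption | omega)
    · exact coeff_WdM_zero Wd α (fun i hi hd => by interval_cases i <;> first | assumption | omega)
    · exact coeff_WdM_zero Wd α (fun i hi hd => by interval_cases i <;> first | assumption | omega)
    · exact coeff_WdM_zero Wd α (fun i hi hd => by interval_cases i <;> first | assumption | omega)
    · exact coeff_WdM_zero Wd α (fun i hi hd => by interval_cases i <;> first | assumption | omega)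
    · -- n = 13 : genuine cancellation
      have h13 : coeff 13 (Wd * M α)
          = coeff 13 Wd + coeff 9 Wd * (-α) + coeff 5 Wd * (-α) ^ 2
            + coeff 1 Wd * (-α) ^ 3 := by
        rw [coeff_mul, Finset.Nat.sum_antidiagonal_eq_sum_range_succ_mk]
        norm_num [Finset.sum_range_succ, coeff_M]
        ring
      rw [h13, hv1]
      linear_combination hvrel
  have hPf : (Wd * M α) * (X ^ 6 + C α * X ^ 10) = w := by
    linear_combination (Wd * X ^ 6) * M_mul α - hWd
  have hQmem : Qv ∈ A569 k := by
    rw [hQv]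
    exact add_mem (add_mem (C_mem y9)
        (mul_mem (C_mem a) (X_pow_mem k (memH 1 0 0 rfl))))
      (mul_mem (C_mem b) (X_pow_mem k (memH 2 0 0 rfl)))
  refine Ideal.mem_span_pair.mpr
    ⟨⟨C y6 + Wd * M α, add_mem (C_mem y6) hP⟩, ⟨Qv, hQmem⟩, ?_⟩
  apply Subtype.ext
  push_cast
  rw [f_val, g_val]
  linear_combination hPf + hwdef

end UlrichAux

namespace UlrichAux
variable {k : Type*} [Field k]

/-! ### Linear independence of `f, g` modulo `I²` -/

lemma mem_of_comb (α β : k) (hβ : 2 * β = 0) (x y z : A569 k)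
    (hz : z ∈ Ideal.span {f569 k α, g569 k β})
    (he : x * f569 k α + y * g569 k β = f569 k α * z) :
    x ∈ Ideal.span {f569 k α, g569 k β} ∧ y ∈ Ideal.span {f569 k α, g569 k β} := by
  set m : A569 k := z - x with hm
  have Zy : ∀ n : ℕ, n ∉ H → coeff n (y : PowerSeries k) = 0 :=
    fun n hn => coeff_zero_of_nmem y.2 hn
  have Zm : ∀ n : ℕ, n ∉ H → coeff n (m : PowerSeries k) = 0 :=
    fun n hn => coeff_zero_of_nmem m.2 hn
  have heval : (x : PowerSeries k) * (X ^ 6 + C α * X ^ 10)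
      + (y : PowerSeries k) * (X ^ 9 + C β * X ^ 10)
      = (X ^ 6 + C α * X ^ 10) * (z : PowerSeries k) := by
    have h1 := congrArg Subtype.val he
    push_cast at h1
    rw [f_val, g_val] at h1
    exact h1
  have hmv : (m : PowerSeries k) = (z : PowerSeries k) - (x : PowerSeries k) := by
    rw [hm]; push_cast; ring
  have hrel : (y : PowerSeries k) * X ^ 3 + C β * ((y : PowerSeries k) * X ^ 4)
      = (m : PowerSeries k) + C α * ((m : PowerSeries k) * X ^ 4) := by
    have h6 : (X : PowerSeries k) ^ 6 ≠ 0 := pow_ne_zero _ X_ne_zero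
    apply mul_left_cancel₀ h6
    rw [hmv]
    linear_combination heval
  have E : ∀ n : ℕ,
      (if 3 ≤ n then coeff (n - 3) (y : PowerSeries k) else 0)
        + β * (if 4 ≤ n then coeff (n - 4) (y : PowerSeries k) else 0)
      = coeff n (m : PowerSeries k)
        + α * (if 4 ≤ n then coeff (n - 4) (m : PowerSeries k) else 0) := by
    intro n
    have h := congrArg (coeff n) hrel
    rwa [map_add, map_add, coeff_mul_X_pow', coeff_C_mul, coeff_mul_X_pow',
      coeff_C_mul, coeff_mul_X_pow'] at h
  have E0 : coeff 0 (m : PowerSeries k) = 0 := by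
    have h := E 0
    simp only [Nat.reduceLeDiff, reduceIte] at h
    linear_combination -h
  have E3 : coeff 0 (y : PowerSeries k) = coeff 3 (m : PowerSeries k) := by
    have h := E 3
    simp only [Nat.reduceSub, Nat.reduceLeDiff, reduceIte] at h
    linear_combination h
  have E5 : coeff 2 (y : PowerSeries k) + β * coeff 1 (y : PowerSeries k)
      = coeff 5 (m : PowerSeries k) + α * coeff 1 (m : PowerSeries k) := by
    have h := E 5
    simp only [Nat.reduceSub, Nat.reduceLeDiff, reduceIte] at h
    linear_combination h
  have E6 : coeff 3 (y : PowerSeries k) + β * coeff 2 (y : PowerSeries k)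
      = coeff 6 (m : PowerSeries k) + α * coeff 2 (m : PowerSeries k) := by
    have h := E 6
    simp only [Nat.reduceSub, Nat.reduceLeDiff, reduceIte] at h
    linear_combination h
  have E8 : coeff 5 (y : PowerSeries k) + β * coeff 4 (y : PowerSeries k)
      = coeff 8 (m : PowerSeries k) + α * coeff 4 (m : PowerSeries k) := by
    have h := E 8
    simp only [Nat.reduceSub, Nat.reduceLeDiff, reduceIte] at h
    linear_combination h
  have E9 : coeff 6 (y : PowerSeries k) + β * coeff 5 (y : PowerSeries k)
      = coeff 9 (m : PowerSeries k) + α * coeff 5 (m : PowerSeries k) := by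
    have h := E 9
    simp only [Nat.reduceSub, Nat.reduceLeDiff, reduceIte] at h
    linear_combination h
  have E10 : coeff 7 (y : PowerSeries k) + β * coeff 6 (y : PowerSeries k)
      = coeff 10 (m : PowerSeries k) + α * coeff 6 (m : PowerSeries k) := by
    have h := E 10
    simp only [Nat.reduceSub, Nat.reduceLeDiff, reduceIte] at h
    linear_combination h
  have E13 : coeff 10 (y : PowerSeries k) + β * coeff 9 (y : PowerSeries k)
      = coeff 13 (m : PowerSeries k) + α * coeff 9 (m : PowerSeries k) := by
    have h := E 13
    simp only [Nat.reduceSub, Nat.reduceLeDiff, reduceIte] at h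
    linear_combination h
  have hy2 : coeff 2 (y : PowerSeries k) = 0 := Zy 2 (notH (by norm_num))
  have hy1 : coeff 1 (y : PowerSeries k) = 0 := Zy 1 (notH (by norm_num))
  have hy3 : coeff 3 (y : PowerSeries k) = 0 := Zy 3 (notH (by norm_num))
  have hy4 : coeff 4 (y : PowerSeries k) = 0 := Zy 4 (notH (by norm_num))
  have hy7 : coeff 7 (y : PowerSeries k) = 0 := Zy 7 (notH (by norm_num))
  have hm1 : coeff 1 (m : PowerSeries k) = 0 := Zm 1 (notH (by norm_num))
  have hm2 : coeff 2 (m : PowerSeries k) = 0 := Zm 2 (notH (by norm_num))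
  have hm3 : coeff 3 (m : PowerSeries k) = 0 := Zm 3 (notH (by norm_num))
  have hm4 : coeff 4 (m : PowerSeries k) = 0 := Zm 4 (notH (by norm_num))
  have hm8 : coeff 8 (m : PowerSeries k) = 0 := Zm 8 (notH (by norm_num))
  have hm13 : coeff 13 (m : PowerSeries k) = 0 := Zm 13 (notH (by norm_num))
  have hy0 : coeff 0 (y : PowerSeries k) = 0 := by rw [E3, hm3]
  have hm5 : coeff 5 (m : PowerSeries k) = 0 := by
    linear_combination -E5 + hy2 + β * hy1 - α * hm1
  have hm6 : coeff 6 (m : PowerSeries k) = 0 := by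
    linear_combination -E6 + hy3 + β * hy2 - α * hm2
  have hy5 : coeff 5 (y : PowerSeries k) = 0 := by
    linear_combination E8 - β * hy4 + hm8 + α * hm4
  have hm9 : coeff 9 (m : PowerSeries k) = coeff 6 (y : PowerSeries k) := by
    linear_combination -E9 + β * hy5 - α * hm5
  have hm10 : coeff 10 (m : PowerSeries k) = β * coeff 6 (y : PowerSeries k) := by
    linear_combination -E10 + hy7 - α * hm6
  have hy10 : coeff 10 (y : PowerSeries k)
      = α * coeff 6 (y : PowerSeries k) + β * coeff 9 (y : PowerSeries k) := by
    linear_combination E13 + hm13 + α * hm9 - (coeff 9 (y : PowerSeries k)) * hβ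
  have hy : y ∈ Ideal.span {f569 k α, g569 k β} :=
    mem_I_of_coeffs α β y hy0 hy5 hy10
  have hmI : m ∈ Ideal.span {f569 k α, g569 k β} := by
    apply mem_I_of_coeffs α β m E0 hm5
    rw [hm10, hm6, hm9]
    ring
  have hx : x = z - m := by rw [hm]; ring
  constructor
  · rw [hx]
    exact Ideal.sub_mem _ hz hmI
  · exact hy

/-! ### Freeness of the cotangent module -/

set_option maxHeartbeats 4000000 in
set_option synthInstance.maxHeartbeats 2000000 in
lemma cotangent_free (α β : k) (hβ : 2 * β = 0) :
    Module.Free ((A569 k) ⧸ Ideal.span {f569 k α, g569 k β})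
      (Ideal.span {f569 k α, g569 k β}).Cotangent := by
  set I : Ideal (A569 k) := Ideal.span {f569 k α, g569 k β} with hI
  have fI : f569 k α ∈ I := Ideal.subset_span (Set.mem_insert _ _)
  have gI : g569 k β ∈ I := Ideal.subset_span (Set.mem_insert_of_mem _ rfl)
  set e : Fin 2 → I.Cotangent :=
    ![I.toCotangent ⟨_, fI⟩, I.toCotangent ⟨_, gI⟩] with he
  have hsmul : ∀ (a : A569 k) (ξ : I.Cotangent), (Ideal.Quotient.mk I a) • ξ = a • ξ :=
    fun a ξ => rfl
  have hspan : ⊤ ≤ Submodule.span ((A569 k) ⧸ I) (Set.range e) := by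
    intro ξ _
    obtain ⟨⟨x, hx⟩, rfl⟩ := I.toCotangent_surjective ξ
    obtain ⟨u, v, huv⟩ := Ideal.mem_span_pair.mp hx
    have hxe : (⟨x, hx⟩ : I) = u • ⟨_, fI⟩ + v • ⟨_, gI⟩ := by
      apply Subtype.ext
      simp [smul_eq_mul, huv]
    rw [hxe, map_add, map_smul, map_smul]
    refine add_mem ?_ ?_
    · rw [← hsmul]
      exact Submodule.smul_mem _ _ (Submodule.subset_span ⟨0, rfl⟩)
    · rw [← hsmul]
      exact Submodule.smul_mem _ _ (Submodule.subset_span ⟨1, rfl⟩)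
  have hind : LinearIndependent ((A569 k) ⧸ I) e := by
    rw [Fintype.linearIndependent_iff]
    intro c hc
    obtain ⟨u, hu⟩ := Ideal.Quotient.mk_surjective (c 0)
    obtain ⟨v, hv⟩ := Ideal.Quotient.mk_surjective (c 1)
    rw [Fin.sum_univ_two] at hc
    have he0 : e 0 = I.toCotangent ⟨_, fI⟩ := rfl
    have he1 : e 1 = I.toCotangent ⟨_, gI⟩ := rfl
    rw [he0, he1, ← hu, ← hv, hsmul, hsmul, ← map_smul, ← map_smul, ← map_add,
      Ideal.toCotangent_eq_zero] at hc
    have hc' : u * f569 k α + v * g569 k β ∈ I ^ 2 := hc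
    rw [hI, I_sq α β hβ] at hc'
    obtain ⟨z, hzI, hz⟩ := Ideal.mem_span_singleton_mul.mp hc'
    obtain ⟨hu', hv'⟩ := mem_of_comb α β hβ u v z hzI hz.symm
    have hcu : c 0 = 0 := by rw [← hu, Ideal.Quotient.eq_zero_iff_mem]; exact hu'
    have hcv : c 1 = 0 := by rw [← hv, Ideal.Quotient.eq_zero_iff_mem]; exact hv'
    intro i
    fin_cases i
    · simpa using hcu
    · simpa using hcv
  exact Module.Free.of_basis (Module.Basis.mk hind hspan)

end UlrichAux

/-- for `α, β ∈ k` with `2β = 0`, the ideal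
`(t⁶ + αt¹⁰, t⁹ + βt¹⁰)` of `A = k⟦t⁵,t⁶,t⁹⟧` is an Ulrich ideal. -/
theorem ulrich_ideal_569_of_normal_form (α β : k) (hβ : 2 * β = 0) :
    IsUlrichIdeal k (A569 k) (Ideal.span {f569 k α, g569 k β}) := by
  refine ⟨UlrichAux.I_isPrimary α β, UlrichAux.rad_I α β, f569 k α,
    Ideal.subset_span (Set.mem_insert _ _), ⟨1, ?_⟩, UlrichAux.I_ne α β,
    UlrichAux.I_sq α β hβ, UlrichAux.cotangent_free α β hβ⟩
  rw [pow_one]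
  exact UlrichAux.I_sq α β hβ
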